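/- Let f : ℤ → ℤ be finitely supported with m = min and M = max of its support, m < M. Suppose (i) for every k in the support, the sign of f(k) equals (-1)^k (alternating coefficients), and (ii) every gap in f has length at most one, i.e., there are no two consecutive integers k, k+1 strictly between m and M with f(k) = f(k+1) = 0. Then |Σ_k f(k)·(-1)^k| ≥ ⌈(M - m)/2⌉ + 1. -/

import Mathlib

theorem abs_alternating_sum_ge (f : ℤ →₀ ℤ) (m M : ℤ)
    (hm : m ∈ f.support) (hM : M ∈ f.support)
    (hmin : ∀ k ∈ f.support, m ≤ k) (hmax : ∀ k ∈ f.support, k ≤ M)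
    (hmM : m < M)
    (hsign : ∀ k ∈ f.support, (f k).sign = (-1 : ℤ) ^ k.natAbs)
    (hgap : ∀ k : ℤ, m < k → k < M → ¬(f k = 0 ∧ f (k + 1) = 0)) :
    (M - m + 1) / 2 + 1 ≤ |∑ k ∈ f.support, f k * (-1 : ℤ) ^ k.natAbs| := by
  have hfm : f m ≠ 0 := Finsupp.mem_support_iff.mp hm
  have hfM : f M ≠ 0 := Finsupp.mem_support_iff.mp hM
  set n : ℤ := (M - m + 1) / 2 with hn
  have h2n : M - m ≤ 2 * n ∧ 2 * n ≤ M - m + 1 := by omega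
  -- each term is at least 1
  have hterm : ∀ k ∈ f.support, (1 : ℤ) ≤ f k * (-1 : ℤ) ^ k.natAbs := by
    intro k hk
    have hs := hsign k hk
    have hne : f k ≠ 0 := Finsupp.mem_support_iff.mp hk
    rcases neg_one_pow_eq_or ℤ k.natAbs with h1 | h1 <;> rw [h1] at hs ⊢
    · have : 0 < f k := Int.sign_eq_one_iff_pos.mp hs
      nlinarith
    · have : f k < 0 := Int.sign_eq_neg_one_iff_neg.mp hs
      nlinarith
  -- the sum is at least the cardinality of the support
  have hsum : (f.support.card : ℤ) ≤ ∑ k ∈ f.support, f k * (-1 : ℤ) ^ k.natAbs := by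
    calc (f.support.card : ℤ) = f.support.card • (1 : ℤ) := by simp
    _ ≤ _ := Finset.card_nsmul_le_sum _ _ _ hterm
  -- an injection from Icc 0 n into the support
  have hcard : n + 1 ≤ (f.support.card : ℤ) := by
    have hinj : (Finset.Icc (0 : ℤ) n).card ≤ f.support.card := by
      apply Finset.card_le_card_of_injOn
        (fun i => if f (m + 2 * i) ≠ 0 then m + 2 * i else m + 2 * i - 1)
      · intro i hi
        simp only [Finset.mem_coe, Finset.mem_Icc] at hi
        by_cases hc : f (m + 2 * i) ≠ 0
        · show (if f (m + 2 * i) ≠ 0 then m + 2 * i else m + 2 * i - 1) ∈ f.support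
          rw [if_pos hc]
          exact Finsupp.mem_support_iff.mpr hc
        · push_neg at hc
          show (if f (m + 2 * i) ≠ 0 then m + 2 * i else m + 2 * i - 1) ∈ f.support
          rw [if_neg (by simp [hc])]
          have hi1 : 1 ≤ i := by
            by_contra h
            have : i = 0 := by omega
            rw [this] at hc; simp at hc; exact hfm hc
          by_cases hMe : m + 2 * i = M + 1
          · have : m + 2 * i - 1 = M := by omega
            rw [this]; exact hM
          · have hlt : m + 2 * i < M := by
              rcases lt_or_eq_of_le (show m + 2 * i ≤ M by omega) with h | h
              · exact h
              · exact absurd (h ▸ hc) hfM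
            have := hgap (m + 2 * i - 1) (by omega) (by omega)
            have h1 : f (m + 2 * i - 1 + 1) = 0 := by
              have : m + 2 * i - 1 + 1 = m + 2 * i := by ring
              rw [this]; exact hc
            have h2 : f (m + 2 * i - 1) ≠ 0 := fun h0 => this ⟨h0, h1⟩
            exact Finsupp.mem_support_iff.mpr h2
      · intro i hi j hj hij
        have hri : (if f (m + 2 * i) ≠ 0 then m + 2 * i else m + 2 * i - 1) = m + 2 * i ∨
            (if f (m + 2 * i) ≠ 0 then m + 2 * i else m + 2 * i - 1) = m + 2 * i - 1 := by
          split <;> simp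
        have hrj : (if f (m + 2 * j) ≠ 0 then m + 2 * j else m + 2 * j - 1) = m + 2 * j ∨
            (if f (m + 2 * j) ≠ 0 then m + 2 * j else m + 2 * j - 1) = m + 2 * j - 1 := by
          split <;> simp
        have hij' : (if f (m + 2 * i) ≠ 0 then m + 2 * i else m + 2 * i - 1) =
            (if f (m + 2 * j) ≠ 0 then m + 2 * j else m + 2 * j - 1) := hij
        rcases hri with h | h <;> rcases hrj with h' | h' <;> rw [h, h'] at hij' <;> omega
    have : (Finset.Icc (0 : ℤ) n).card = (n + 1).toNat := by
      rw [Int.card_Icc]; congr 1; omega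
    omega
  have habs : |∑ k ∈ f.support, f k * (-1 : ℤ) ^ k.natAbs| =
      ∑ k ∈ f.support, f k * (-1 : ℤ) ^ k.natAbs := abs_of_nonneg (by omega)
  omega
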